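/- Let G be a finite abelian group and φ an automorphism with G = [G, φ]. Then |G| equals the cardinality of the minimal right Engel sink 𝓡(φ) of φ in G⟨φ⟩; in particular |G| ≤ |𝓡(φ)|. -/

import Mathlib

open scoped commutatorElement

/-- Iterated left Engel commutator `[x, _n h]`, with `[x, _0 h] = x`. -/
def lEngel {H : Type} [Group H] (h : H) : H → ℕ → H
  | x, 0 => x
  | x, n + 1 => ⁅lEngel h x n, h⁆

/-- Iterated right Engel commutator `[a, _n x]`, with `[a, _0 x] = a`. -/
def rEngel {H : Type} [Group H] (a : H) : H → ℕ → H
  | _, 0 => a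
  | x, n + 1 => ⁅rEngel a x n, x⁆

/-- A left Engel sink of `h`. -/
def IsLeftEngelSink {H : Type} [Group H] (h : H) (L : Set H) : Prop :=
  ∀ x : H, ∃ N : ℕ, ∀ n ≥ N, lEngel h x n ∈ L

/-- The minimal left Engel sink of `h`. -/
def IsMinLeftEngelSink {H : Type} [Group H] (h : H) (L : Set H) : Prop :=
  IsLeftEngelSink h L ∧ ∀ L' : Set H, IsLeftEngelSink h L' → L ⊆ L'

/-- A right Engel sink of `a`. -/
def IsRightEngelSink {H : Type} [Group H] (a : H) (R : Set H) : Prop :=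
  ∀ x : H, ∃ N : ℕ, ∀ n ≥ N, rEngel a x n ∈ R

/-- The minimal right Engel sink of `a`. -/
def IsMinRightEngelSink {H : Type} [Group H] (a : H) (R : Set H) : Prop :=
  IsRightEngelSink a R ∧ ∀ R' : Set H, IsRightEngelSink a R' → R ⊆ R'

section Aux

open Pointwise

variable {H : Type} [Group H]

theorem rEngel_mem {G : Subgroup H} [G.Normal] {φ : H}
    (hgen : G ⊔ Subgroup.zpowers φ = ⊤) (x : H) :
    ∀ n ≥ 1, rEngel φ x n ∈ G := by
  have hx : x ∈ (G : Set H) * ((Subgroup.zpowers φ : Subgroup H) : Set H) := by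
    rw [← Subgroup.normal_mul, hgen]; trivial
  obtain ⟨g, hg, y, hy, hxy⟩ := hx
  obtain ⟨k, hk⟩ := hy
  have conjmem : ∀ t ∈ G, ∀ z : H, ⁅t, z⁆ ∈ G := by
    intro t ht z
    have : t * (z * t⁻¹ * z⁻¹) ∈ G :=
      G.mul_mem ht (‹G.Normal›.conj_mem t⁻¹ (G.inv_mem ht) z)
    simpa [commutatorElement_def, mul_assoc] using this
  intro n hn
  induction n with
  | zero => omega
  | succ n ih =>
    rcases Nat.eq_or_lt_of_le hn with h1 | h1
    · -- n + 1 = 1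
      have hn0 : n = 0 := by omega
      subst hn0
      show ⁅rEngel φ x 0, x⁆ ∈ G
      have : ⁅(φ : H), x⁆ = φ * g * φ⁻¹ * g⁻¹ := by
        subst hxy hk; group
      show ⁅(φ : H), x⁆ ∈ G
      rw [this]
      have : (φ * g * φ⁻¹) * g⁻¹ ∈ G :=
        G.mul_mem (‹G.Normal›.conj_mem g hg φ) (G.inv_mem hg)
      simpa [mul_assoc] using this
    · exact conjmem _ (ih (by omega)) x

end Aux

/-- Model of `H = G⟨φ⟩` with `G` a finite abelian normal subgroup, `G = [G, φ]`.
Then `|G|` equals the cardinality of the minimal right Engel sink of `φ` in `H`. -/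
theorem stmt14 (H : Type) [Group H] [Finite H] (G : Subgroup H) [G.Normal] (φ : H)
    (hab : ∀ a ∈ G, ∀ b ∈ G, a * b = b * a)
    (hgen : G ⊔ Subgroup.zpowers φ = ⊤)
    (hcomm : Subgroup.closure {x : H | ∃ g ∈ G, x = ⁅g, φ⁆} = G)
    (R : Set H) (hR : IsMinRightEngelSink φ R) :
    Nat.card G = Nat.card R := by
  obtain ⟨hRsink, hRmin⟩ := hR
  -- G is a right Engel sink, hence R ⊆ G
  have hGsink : IsRightEngelSink φ (↑G : Set H) := fun x =>
    ⟨1, fun n hn => rEngel_mem hgen x n hn⟩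
  have hRG : R ⊆ ↑G := hRmin _ hGsink
  -- the endomorphism F : G → G, g ↦ ⁅g, φ⁆
  have hfmem : ∀ t ∈ G, ⁅t, φ⁆ ∈ G := by
    intro t ht
    have : t * (φ * t⁻¹ * φ⁻¹) ∈ G :=
      G.mul_mem ht (‹G.Normal›.conj_mem t⁻¹ (G.inv_mem ht) φ)
    simpa [commutatorElement_def, mul_assoc] using this
  let F : G →* G :=
    { toFun := fun t => ⟨⁅(t : H), φ⁆, hfmem t t.2⟩
      map_one' := by ext; simp
      map_mul' := by
        rintro ⟨s, hs⟩ ⟨t, ht⟩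
        ext
        show ⁅s * t, φ⁆ = ⁅s, φ⁆ * ⁅t, φ⁆
        have hs' : φ * s⁻¹ * φ⁻¹ ∈ G := ‹G.Normal›.conj_mem s⁻¹ (G.inv_mem hs) φ
        have ht' : φ * t⁻¹ * φ⁻¹ ∈ G := ‹G.Normal›.conj_mem t⁻¹ (G.inv_mem ht) φ
        have key : (φ * s⁻¹ * φ⁻¹) * (t * (φ * t⁻¹ * φ⁻¹)) =
            (t * (φ * t⁻¹ * φ⁻¹)) * (φ * s⁻¹ * φ⁻¹) :=
          hab _ hs' _ (G.mul_mem ht ht')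
        calc ⁅s * t, φ⁆ = s * ((t * (φ * t⁻¹ * φ⁻¹)) * (φ * s⁻¹ * φ⁻¹)) := by
              simp only [commutatorElement_def]; group
          _ = s * ((φ * s⁻¹ * φ⁻¹) * (t * (φ * t⁻¹ * φ⁻¹))) := by rw [key]
          _ = ⁅s, φ⁆ * ⁅t, φ⁆ := by simp only [commutatorElement_def]; group }
  -- F is surjective
  have hFsurj : Function.Surjective F := by
    intro a
    have hsub : G ≤ Subgroup.map G.subtype F.range := by
      conv_lhs => rw [← hcomm]
      apply Subgroup.closure_le _ |>.mpr
      rintro x ⟨g, hg, rfl⟩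
      exact ⟨F ⟨g, hg⟩, ⟨⟨g, hg⟩, rfl⟩, rfl⟩
    obtain ⟨b, hb, hba⟩ := hsub a.2
    obtain ⟨c, rfl⟩ := MonoidHom.mem_range.mp hb
    exact ⟨c, Subtype.ext (by simpa using hba)⟩
  have hFbij : Function.Bijective F :=
    ⟨Finite.injective_iff_surjective.mpr hFsurj, hFsurj⟩
  -- F has finite order m ≥ 1 as a permutation
  let e : Equiv.Perm G := Equiv.ofBijective F hFbij
  have he : IsOfFinOrder e := isOfFinOrder_of_finite e
  set m := orderOf e with hm
  have hm1 : 1 ≤ m := he.orderOf_pos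
  have hfixm : ∀ t : G, (⇑F)^[m] t = t := by
    intro t
    have h1 : e ^ m = 1 := pow_orderOf_eq_one e
    show (⇑e)^[m] t = t
    rw [Equiv.Perm.iterate_eq_pow, h1]
    rfl
  -- key computation: rEngel φ (g*φ) n = (F^[n] g)⁻¹ for n ≥ 1
  have hkey : ∀ (g : G) (n : ℕ), rEngel φ ((g : H) * φ) (n + 1) = (↑((⇑F)^[n + 1] g) : H)⁻¹ := by
    intro g n
    induction n with
    | zero =>
      show ⁅rEngel φ ((g:H) * φ) 0, (g:H) * φ⁆ = _
      show ⁅(φ:H), (g:H)*φ⁆ = (↑(F g) : H)⁻¹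
      show ⁅(φ:H), (g:H)*φ⁆ = (⁅(g:H), φ⁆)⁻¹
      rw [commutatorElement_def, commutatorElement_def]
      group
    | succ n ih =>
      show ⁅rEngel φ ((g:H) * φ) (n+1), (g:H) * φ⁆ = _
      rw [ih]
      set u : G := (⇑F)^[n+1] g with hu
      have hFu : ((⇑F)^[n+2] g) = F u := by
        rw [Function.iterate_succ_apply', hu]
      rw [hFu]
      show ⁅(↑u : H)⁻¹, (g:H) * φ⁆ = (⁅(u:H), φ⁆)⁻¹
      have hv : φ * (u:H) * φ⁻¹ ∈ G := ‹G.Normal›.conj_mem u u.2 φ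
      have h1 : (g:H) * (φ * u * φ⁻¹) = (φ * u * φ⁻¹) * g := hab _ g.2 _ hv
      have h2 : (u:H)⁻¹ * (φ * u * φ⁻¹) = (φ * u * φ⁻¹) * (u:H)⁻¹ :=
        hab _ (G.inv_mem u.2) _ hv
      calc ⁅(↑u : H)⁻¹, (g:H) * φ⁆
          = (u:H)⁻¹ * ((g:H) * (φ * u * φ⁻¹) * (g:H)⁻¹) := by
            simp only [commutatorElement_def]; group
        _ = (u:H)⁻¹ * ((φ * u * φ⁻¹) * (g:H) * (g:H)⁻¹) := by rw [h1]
        _ = (u:H)⁻¹ * (φ * u * φ⁻¹) := by group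
        _ = (φ * u * φ⁻¹) * (u:H)⁻¹ := h2
        _ = (⁅(u:H), φ⁆)⁻¹ := by simp only [commutatorElement_def]; group
  -- G ⊆ R
  have hGR : (↑G : Set H) ⊆ R := by
    intro a ha
    set g : G := (⟨a, ha⟩ : G)⁻¹ with hg
    obtain ⟨N, hN⟩ := hRsink ((g : H) * φ)
    have hfix : (⇑F)^[(N + 1) * m] g = g := by
      rw [Nat.mul_comm, Function.iterate_mul]
      exact Function.iterate_fixed (hfixm g) (N + 1)
    have hge : (N + 1) * m ≥ N + 1 := Nat.le_mul_of_pos_right _ hm1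
    obtain ⟨n, hn⟩ : ∃ n, (N + 1) * m = n + 1 := ⟨(N+1)*m - 1, by omega⟩
    have := hN ((N+1)*m) (by omega)
    rw [hn] at this hfix
    rw [hkey g n, hfix] at this
    simpa [hg] using this
  have hReq : R = (↑G : Set H) := Set.Subset.antisymm hRG hGR
  rw [hReq]
  rfl
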